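/- arXiv:2111.05818 — 5 statements merged into one kernel-verified Lean document; each statement's English description precedes it below -/
import Mathlib

section
/- For a closed convex set C ⊆ ℝ^d with B(r) ⊆ C ⊆ B(R), 0 < r ≤ R, and any point u ∉ C, the point u/γ_C(u) is a Gauge projection of u onto C, i.e., u/γ_C(u) ∈ argmin_{x ∈ C} γ_C(u − x). -/
/-- For a closed convex set `C` with `B(r) ⊆ C ⊆ B(R)`, `0 < r ≤ R`, and any
`u ∉ C`, the point `u / γ_C(u)` is a Gauge projection of `u` onto `C`: it
belongs to `C` and minimizes `x ↦ γ_C(u − x)` over `x ∈ C`. -/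
theorem gauge_projection_mem_argmin {d : ℕ} (C : Set (EuclideanSpace ℝ (Fin d))) (r R : ℝ)
    (hr : 0 < r) (hrR : r ≤ R) (hclosed : IsClosed C) (hconv : Convex ℝ C)
    (hlow : Metric.closedBall 0 r ⊆ C) (hhigh : C ⊆ Metric.closedBall 0 R)
    (u : EuclideanSpace ℝ (Fin d)) (hu : u ∉ C) :
    (gauge C u)⁻¹ • u ∈ C ∧
      ∀ x ∈ C, gauge C (u - (gauge C u)⁻¹ • u) ≤ gauge C (u - x) := by
  have hC0 : C ∈ nhds (0 : EuclideanSpace ℝ (Fin d)) :=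
    Filter.mem_of_superset (Metric.closedBall_mem_nhds 0 hr) hlow
  have hmem : ∀ y, y ∈ C ↔ gauge C y ≤ 1 := by
    intro y
    rw [gauge_le_one_iff_mem_closure hconv hC0, hclosed.closure_eq]
  set g := gauge C u with hg
  have hg1 : 1 < g := by
    by_contra h
    exact hu ((hmem u).2 (not_lt.1 h))
  have hgpos : 0 < g := lt_trans one_pos hg1
  have habs : Absorbent ℝ C := absorbent_nhds_zero hC0
  have hsmul : gauge C ((g)⁻¹ • u) = 1 := by
    rw [gauge_smul_of_nonneg (inv_nonneg.2 hgpos.le), smul_eq_mul, ← hg,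
      inv_mul_cancel₀ hgpos.ne']
  have hmem' : (g)⁻¹ • u ∈ C := (hmem _).2 hsmul.le
  refine ⟨hmem', fun x hx => ?_⟩
  have hinv : g⁻¹ ≤ 1 := by
    rw [inv_le_one_iff₀]; right; exact hg1.le
  have h1 : gauge C (u - (g)⁻¹ • u) = g - 1 := by
    have he : u - (g)⁻¹ • u = (1 - g⁻¹) • u := by rw [sub_smul, one_smul]
    rw [he, gauge_smul_of_nonneg (by linarith : (0:ℝ) ≤ 1 - g⁻¹), smul_eq_mul, ← hg]
    field_simp
  have h2 : g ≤ gauge C (u - x) + gauge C x := by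
    have := gauge_add_le hconv habs (u - x) x
    simpa using this
  have h3 : gauge C x ≤ 1 := (hmem x).1 hx
  rw [h1]
  linarith
end

section
/- For a closed convex set C ⊆ ℝ^d with B(r) ⊆ C ⊆ B(R), 0 < r ≤ R, the Gauge distance S_C(w) := inf_{u ∈ C} γ_C(w − u) satisfies S_C(w) = max(0, γ_C(w) − 1) for all w ∈ ℝ^d. -/
/-- The Gauge distance to `C`: `S_C(w) = inf_{u ∈ C} γ_C(w − u)`. -/
noncomputable def gaugeDist {d : ℕ} (C : Set (EuclideanSpace ℝ (Fin d)))
    (w : EuclideanSpace ℝ (Fin d)) : ℝ :=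
  sInf ((fun u => gauge C (w - u)) '' C)

/-- For a closed convex set `C` with `B(r) ⊆ C ⊆ B(R)`, `0 < r ≤ R`, the Gauge
distance satisfies `S_C(w) = max(0, γ_C(w) − 1)` for all `w`. -/
theorem gaugeDist_eq_max {d : ℕ} (C : Set (EuclideanSpace ℝ (Fin d))) (r R : ℝ)
    (hr : 0 < r) (hrR : r ≤ R) (hclosed : IsClosed C) (hconv : Convex ℝ C)
    (hlow : Metric.closedBall 0 r ⊆ C) (hhigh : C ⊆ Metric.closedBall 0 R) :
    ∀ w : EuclideanSpace ℝ (Fin d), gaugeDist C w = max 0 (gauge C w - 1) := by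
  intro w
  have hC0 : C ∈ nhds (0 : EuclideanSpace ℝ (Fin d)) :=
    Filter.mem_of_superset (Metric.closedBall_mem_nhds 0 hr) hlow
  have habs : Absorbent ℝ C := absorbent_nhds_zero hC0
  have h0C : (0 : EuclideanSpace ℝ (Fin d)) ∈ C := mem_of_mem_nhds hC0
  have hmem : ∀ x, gauge C x ≤ 1 → x ∈ C := fun x hx => by
    have := (gauge_le_one_iff_mem_closure hconv hC0).mp hx
    rwa [hclosed.closure_eq] at this
  have hne : ((fun u => gauge C (w - u)) '' C).Nonempty := ⟨_, ⟨0, h0C, rfl⟩⟩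
  have hbdd : BddBelow ((fun u => gauge C (w - u)) '' C) := by
    refine ⟨0, ?_⟩
    rintro x ⟨u, _, rfl⟩
    exact gauge_nonneg _
  apply le_antisymm
  · -- csInf ≤ max
    rcases le_or_gt (gauge C w) 1 with h1 | h1
    · have : gaugeDist C w ≤ 0 := by
        have : gauge C (w - w) = 0 := by simp [gauge_zero]
        calc gaugeDist C w ≤ gauge C (w - w) := csInf_le hbdd ⟨w, hmem w h1, rfl⟩
          _ = 0 := this
      simpa [max_eq_left (by linarith : gauge C w - 1 ≤ 0)] using this
    · set g := gauge C w with hg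
      have hgpos : 0 < g := lt_trans one_pos h1
      have hu : (g⁻¹ • w) ∈ C := by
        apply hmem
        rw [gauge_smul_of_nonneg (inv_nonneg.2 hgpos.le), smul_eq_mul,
          inv_mul_cancel₀ hgpos.ne']
      have hwu : w - g⁻¹ • w = (1 - g⁻¹) • w := by
        rw [sub_smul, one_smul]
      have hval : gauge C (w - g⁻¹ • w) = g - 1 := by
        rw [hwu, gauge_smul_of_nonneg (by
          rw [sub_nonneg]; exact inv_le_one_of_one_le₀ h1.le), smul_eq_mul, ← hg,
          sub_mul, one_mul, inv_mul_cancel₀ hgpos.ne']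
      have : gaugeDist C w ≤ g - 1 := hval ▸ csInf_le hbdd ⟨_, hu, rfl⟩
      simpa [max_eq_right (by linarith : (0:ℝ) ≤ g - 1)] using this
  · -- max ≤ csInf
    apply le_csInf hne
    rintro x ⟨u, huC, rfl⟩
    have h1 : gauge C w ≤ gauge C (w - u) + gauge C u := by
      have := gauge_add_le hconv habs (w - u) u
      simpa using this
    have h2 : gauge C u ≤ 1 := gauge_le_one_of_mem huC
    exact max_le (gauge_nonneg _) (by linarith)
end

section
/- For a closed convex set C ⊆ ℝ^d with B(r) ⊆ C ⊆ B(R), 0 < r ≤ R, any maximizer s* ∈ argmax_{s ∈ C°} ⟨s, w⟩ for w ∉ C lies in the normal cone of C at the point w/γ_C(w). -/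
open RealInnerProductSpace

/-- The polar set of `C`: `C° = {s : ⟪s, u⟫ ≤ 1 for all u ∈ C}`. -/
def polarSet {d : ℕ} (C : Set (EuclideanSpace ℝ (Fin d))) :
    Set (EuclideanSpace ℝ (Fin d)) :=
  {s | ∀ u ∈ C, ⟪s, u⟫ ≤ 1}

/-- The normal cone of `C` at `u`: `N_C(u) = {s : ⟪s, x − u⟫ ≤ 0 for all x ∈ C}`. -/
def normalCone {d : ℕ} (C : Set (EuclideanSpace ℝ (Fin d)))
    (u : EuclideanSpace ℝ (Fin d)) : Set (EuclideanSpace ℝ (Fin d)) :=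
  {s | ∀ x ∈ C, ⟪s, x - u⟫ ≤ 0}

/-- For a closed convex set `C` with `B(r) ⊆ C ⊆ B(R)`, `0 < r ≤ R`, and `w ∉ C`,
any maximizer `s* ∈ argmax_{s ∈ C°} ⟪s, w⟫` lies in the normal cone of `C` at
the point `w / γ_C(w)`. -/
theorem argmax_polar_mem_normalCone {d : ℕ} (C : Set (EuclideanSpace ℝ (Fin d))) (r R : ℝ)
    (hr : 0 < r) (hrR : r ≤ R) (hclosed : IsClosed C) (hconv : Convex ℝ C)
    (hlow : Metric.closedBall 0 r ⊆ C) (hhigh : C ⊆ Metric.closedBall 0 R)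
    (w : EuclideanSpace ℝ (Fin d)) (hw : w ∉ C)
    (sStar : EuclideanSpace ℝ (Fin d)) (hs : sStar ∈ polarSet C)
    (hmax : ∀ s ∈ polarSet C, ⟪s, w⟫ ≤ ⟪sStar, w⟫) :
    sStar ∈ normalCone C ((gauge C w)⁻¹ • w) := by
  set γ := gauge C w with hγdef
  have h0C : C ∈ nhds (0 : EuclideanSpace ℝ (Fin d)) :=
    Filter.mem_of_superset (Metric.closedBall_mem_nhds 0 hr) hlow
  have h0 : (0 : EuclideanSpace ℝ (Fin d)) ∈ C := hlow (Metric.mem_closedBall_self hr.le)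
  have hγ1 : 1 < γ := by
    by_contra h
    push_neg at h
    exact hw ((hclosed.closure_eq ▸ (gauge_le_one_iff_mem_closure hconv h0C).1 h : w ∈ C))
  have hγ0 : 0 < γ := lt_trans one_pos hγ1
  -- key: ⟪sStar, w⟫ ≥ γ
  have hkey : γ ≤ ⟪sStar, w⟫ := by
    by_contra h
    push_neg at h
    obtain ⟨t, ht1, ht2⟩ := exists_between (max_lt h hγ0 : max ⟪sStar, w⟫ 0 < γ)
    have ht0 : 0 < t := lt_of_le_of_lt (le_max_right _ _) ht1
    have hwt : t⁻¹ • w ∉ C := by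
      intro hmem
      have := gauge_le_one_of_mem hmem
      rw [gauge_smul_of_nonneg (inv_nonneg.2 ht0.le), smul_eq_mul, ← hγdef,
        inv_mul_le_iff₀ ht0, mul_one] at this
      exact absurd this (not_le.2 ht2)
    obtain ⟨f, c, hfC, hfw⟩ := geometric_hahn_banach_closed_point hconv hclosed hwt
    have hc0 : 0 < c := by simpa using hfC 0 h0
    set v := (InnerProductSpace.toDual ℝ (EuclideanSpace ℝ (Fin d))).symm f with hv
    have hvf : ∀ x, ⟪v, x⟫ = f x := fun x => by
      rw [hv]
      exact InnerProductSpace.toDual_symm_apply (𝕜 := ℝ) (E := EuclideanSpace ℝ (Fin d))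
    have hspolar : c⁻¹ • v ∈ polarSet C := by
      intro u hu
      rw [real_inner_smul_left, hvf]
      calc c⁻¹ * f u ≤ c⁻¹ * c := by
            exact mul_le_mul_of_nonneg_left (hfC u hu).le (inv_nonneg.2 hc0.le)
        _ = 1 := inv_mul_cancel₀ hc0.ne'
    have : t < ⟪c⁻¹ • v, w⟫ := by
      rw [real_inner_smul_left, hvf]
      have : c < f (t⁻¹ • w) := hfw
      rw [map_smul, smul_eq_mul] at this
      have h2 : t * c < f w := by
        have := mul_lt_mul_of_pos_left this ht0
        rwa [← mul_assoc, mul_inv_cancel₀ ht0.ne', one_mul] at this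
      calc t = c⁻¹ * (t * c) := by field_simp
        _ < c⁻¹ * f w := by exact mul_lt_mul_of_pos_left h2 (inv_pos.2 hc0)
    exact absurd (hmax _ hspolar) (not_le.2 (lt_of_le_of_lt (le_max_left _ _)
      (ht1.trans this)))
  intro x hx
  rw [inner_sub_right, real_inner_smul_right, sub_nonpos]
  calc ⟪sStar, x⟫ ≤ 1 := hs x hx
    _ ≤ γ⁻¹ * ⟪sStar, w⟫ := by
        have h1 := mul_le_mul_of_nonneg_left hkey (inv_nonneg.2 hγ0.le)
        have h2 := inv_mul_cancel₀ hγ0.ne'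
        linarith
end

section
/- For n > 2, the convex hull of the special orthogonal group SO(n) ⊆ ℝ^{n×n} (rotation matrices) contains the Frobenius-norm ball of radius 1/2 centered at the origin and is contained in the Frobenius-norm ball of radius √n. -/
open Matrix Finset Polynomial

/-- The special orthogonal (rotation) matrices:
`SO(n) = {x ∈ ℝ^{n×n} : xᵀx = I, det x = 1}`. -/
def SOset (n : ℕ) : Set (Matrix (Fin n) (Fin n) ℝ) :=
  {x | x.transpose * x = 1 ∧ x.det = 1}

/-- The Frobenius norm of a real square matrix. -/
noncomputable def frobNorm {n : ℕ} (x : Matrix (Fin n) (Fin n) ℝ) : ℝ :=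
  Real.sqrt (∑ i, ∑ j, (x i j) ^ 2)

/-- Even sign vectors. -/
def Esign (n : ℕ) : Set (Fin n → ℝ) :=
  {v | (∀ i, v i = 1 ∨ v i = -1) ∧ ∏ i, v i = 1}

lemma signvec_ind (n : ℕ) (k : ℕ) :
    ∀ (v : Fin n → ℝ), (∀ i, |v i| ≤ 1) →
      2 ≤ (Finset.univ.filter (fun i => v i = 0)).card →
      (Finset.univ.filter (fun i => v i ≠ 1 ∧ v i ≠ -1)).card ≤ k →
      v ∈ convexHull ℝ (Esign n) := by
  induction k with
  | zero =>
    intro v hb hZ hN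
    exfalso
    have hsub : (Finset.univ.filter (fun i => v i = 0)) ⊆
        (Finset.univ.filter (fun i => v i ≠ 1 ∧ v i ≠ -1)) := by
      intro i hi
      simp only [mem_filter, mem_univ, true_and] at hi ⊢
      rw [hi]; norm_num
    have := Finset.card_le_card hsub
    omega
  | succ k IH =>
    intro v hb hZ hN
    by_cases hA : ∃ i, v i ≠ 0 ∧ v i ≠ 1 ∧ v i ≠ -1
    · obtain ⟨i, hi0, hi1, hi2⟩ := hA
      set v1 := Function.update v i 1 with hv1
      set v2 := Function.update v i (-1) with hv2
      have hzeq : ∀ c : ℝ, c ≠ 0 → (Finset.univ.filter (fun l => Function.update v i c l = 0)) =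
          (Finset.univ.filter (fun l => v l = 0)) := by
        intro c hc
        apply Finset.ext
        intro l
        simp only [mem_filter, mem_univ, true_and]
        rcases eq_or_ne l i with rfl | h
        · simp [Function.update_self, hc, hi0]
        · simp [Function.update_of_ne h]
      have hNsub : ∀ c : ℝ, (c = 1 ∨ c = -1) →
          (Finset.univ.filter (fun l => Function.update v i c l ≠ 1 ∧ Function.update v i c l ≠ -1)) =
          (Finset.univ.filter (fun l => v l ≠ 1 ∧ v l ≠ -1)).erase i := by
        intro c hc
        apply Finset.ext
        intro l
        simp only [mem_filter, mem_univ, true_and, mem_erase]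
        rcases eq_or_ne l i with rfl | h
        · simp only [Function.update_self]
          rcases hc with rfl | rfl <;> simp
        · simp [Function.update_of_ne h, h]
      have hNcard : ∀ c : ℝ, (c = 1 ∨ c = -1) →
          (Finset.univ.filter (fun l => Function.update v i c l ≠ 1 ∧ Function.update v i c l ≠ -1)).card ≤ k := by
        intro c hc
        rw [hNsub c hc]
        have hiN : i ∈ (Finset.univ.filter (fun l => v l ≠ 1 ∧ v l ≠ -1)) := by
          simp [hi1, hi2]
        have := Finset.card_erase_of_mem hiN
        omega
      have hbu : ∀ c : ℝ, (c = 1 ∨ c = -1) → ∀ l, |Function.update v i c l| ≤ 1 := by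
        intro c hc l
        rcases eq_or_ne l i with rfl | h
        · rcases hc with rfl | rfl <;> simp [Function.update_self]
        · simp [Function.update_of_ne h, hb l]
      have m1 : v1 ∈ convexHull ℝ (Esign n) := by
        apply IH v1 (hbu 1 (Or.inl rfl)) _ (hNcard 1 (Or.inl rfl))
        rw [hv1, hzeq 1 one_ne_zero]; exact hZ
      have m2 : v2 ∈ convexHull ℝ (Esign n) := by
        apply IH v2 (hbu (-1) (Or.inr rfl)) _ (hNcard (-1) (by norm_num))
        rw [hv2, hzeq (-1) (by norm_num)]; exact hZ
      have hcomb : v = ((1 + v i)/2) • v1 + ((1 - v i)/2) • v2 := by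
        funext l
        rcases eq_or_ne l i with rfl | h
        · simp only [Pi.add_apply, Pi.smul_apply, hv1, hv2, Function.update_self,
            smul_eq_mul]
          ring
        · simp only [Pi.add_apply, Pi.smul_apply, hv1, hv2, Function.update_of_ne h,
            smul_eq_mul]
          ring
      rw [hcomb]
      have h1 := abs_le.mp (hb i)
      exact (convex_convexHull ℝ (Esign n)) m1 m2 (by linarith [h1.2]) (by linarith [h1.1])
        (by ring)
    · push_neg at hA
      -- every coordinate is 0, 1 or -1
      have htri : ∀ i, v i = 0 ∨ v i = 1 ∨ v i = -1 := by
        intro i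
        by_cases h0 : v i = 0
        · exact Or.inl h0
        · by_cases h1 : v i = 1
          · exact Or.inr (Or.inl h1)
          · exact Or.inr (Or.inr (hA i h0 h1))
      -- zeros = non-units
      have hZN : (Finset.univ.filter (fun i => v i ≠ 1 ∧ v i ≠ -1)) =
          (Finset.univ.filter (fun i => v i = 0)) := by
        apply Finset.ext
        intro i
        simp only [mem_filter, mem_univ, true_and]
        constructor
        · intro ⟨h1, h2⟩
          rcases htri i with h | h | h
          · exact h
          · exact absurd h h1
          · exact absurd h h2
        · intro h
          rw [h]; norm_num
      by_cases hZ3 : 3 ≤ (Finset.univ.filter (fun i => v i = 0)).card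
      · -- split one zero into ±1
        have hne : (Finset.univ.filter (fun i => v i = 0)).Nonempty := by
          rw [← Finset.card_pos]; omega
        obtain ⟨i, hi⟩ := hne
        simp only [mem_filter, mem_univ, true_and] at hi
        have hzcard : ∀ c : ℝ, (c = 1 ∨ c = -1) →
            (Finset.univ.filter (fun l => Function.update v i c l = 0)) =
            (Finset.univ.filter (fun l => v l = 0)).erase i := by
          intro c hc
          apply Finset.ext
          intro l
          simp only [mem_filter, mem_univ, true_and, mem_erase]
          rcases eq_or_ne l i with rfl | h
          · rcases hc with rfl | rfl <;> simp [Function.update_self]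
          · simp [Function.update_of_ne h, h]
        have hNsub : ∀ c : ℝ, (c = 1 ∨ c = -1) →
            (Finset.univ.filter (fun l => Function.update v i c l ≠ 1 ∧ Function.update v i c l ≠ -1)) =
            (Finset.univ.filter (fun l => v l ≠ 1 ∧ v l ≠ -1)).erase i := by
          intro c hc
          apply Finset.ext
          intro l
          simp only [mem_filter, mem_univ, true_and, mem_erase]
          rcases eq_or_ne l i with rfl | h
          · simp only [Function.update_self]
            rcases hc with rfl | rfl <;> simp
          · simp [Function.update_of_ne h, h]
        have hbu : ∀ c : ℝ, (c = 1 ∨ c = -1) → ∀ l, |Function.update v i c l| ≤ 1 := by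
          intro c hc l
          rcases eq_or_ne l i with rfl | h
          · rcases hc with rfl | rfl <;> simp [Function.update_self]
          · simp [Function.update_of_ne h, hb l]
        have hiN : i ∈ (Finset.univ.filter (fun l => v l ≠ 1 ∧ v l ≠ -1)) := by
          rw [hZN]; simp [hi]
        have hcd := Finset.card_erase_of_mem hiN
        have hcz : i ∈ (Finset.univ.filter (fun l => v l = 0)) := by simp [hi]
        have hcd2 := Finset.card_erase_of_mem hcz
        have m1 : Function.update v i 1 ∈ convexHull ℝ (Esign n) := by
          apply IH _ (hbu 1 (Or.inl rfl)) _ _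
          · rw [hzcard 1 (Or.inl rfl), hcd2]; omega
          · rw [hNsub 1 (Or.inl rfl), hcd]; omega
        have m2 : Function.update v i (-1) ∈ convexHull ℝ (Esign n) := by
          apply IH _ (hbu (-1) (by norm_num)) _ _
          · rw [hzcard (-1) (by norm_num), hcd2]; omega
          · rw [hNsub (-1) (by norm_num), hcd]; omega
        have hcomb : v = (1/2 : ℝ) • Function.update v i 1 +
            (1/2 : ℝ) • Function.update v i (-1) := by
          funext l
          rcases eq_or_ne l i with rfl | h
          · simp only [Pi.add_apply, Pi.smul_apply, Function.update_self, smul_eq_mul, hi]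
            ring
          · simp only [Pi.add_apply, Pi.smul_apply, Function.update_of_ne h, smul_eq_mul]
            ring
        rw [hcomb]
        exact (convex_convexHull ℝ (Esign n)) m1 m2 (by norm_num) (by norm_num) (by norm_num)
      · -- exactly two zeros: base case
        have hZ2 : (Finset.univ.filter (fun i => v i = 0)).card = 2 := by omega
        obtain ⟨i, j, hij, hij2⟩ := Finset.card_eq_two.mp hZ2
        have hvi : v i = 0 := by
          have : i ∈ (Finset.univ.filter (fun l => v l = 0)) := by rw [hij2]; simp
          simpa using this
        have hvj : v j = 0 := by
          have : j ∈ (Finset.univ.filter (fun l => v l = 0)) := by rw [hij2]; simp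
          simpa using this
        have hother : ∀ l, l ≠ i → l ≠ j → v l = 1 ∨ v l = -1 := by
          intro l hli hlj
          rcases htri l with h | h | h
          · exfalso
            have : l ∈ (Finset.univ.filter (fun m => v m = 0)) := by simp [h]
            rw [hij2] at this
            simp only [Finset.mem_insert, Finset.mem_singleton] at this
            tauto
          · exact Or.inl h
          · exact Or.inr h
        set s : Finset (Fin n) := (Finset.univ.erase i).erase j with hs
        have hp : (∏ l ∈ s, v l) = 1 ∨ (∏ l ∈ s, v l) = -1 := by
          apply Finset.prod_induction _ (fun x => x = 1 ∨ x = -1)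
          · rintro a b (rfl | rfl) (rfl | rfl) <;> norm_num
          · norm_num
          · intro l hl
            simp only [hs, Finset.mem_erase] at hl
            exact hother l hl.2.1 hl.1
        set p : ℝ := ∏ l ∈ s, v l with hpdef
        have hji : j ≠ i := fun h => hij (h.symm)
        set e1 : Fin n → ℝ := Function.update (Function.update v i 1) j p with he1
        set e2 : Fin n → ℝ := Function.update (Function.update v i (-1)) j (-p) with he2
        have hprod : ∀ (a b : ℝ), (∏ l, (Function.update (Function.update v i a) j b) l)
            = a * b * p := by
          intro a b
          have h1 : ∏ l, (Function.update (Function.update v i a) j b) l =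
              (Function.update (Function.update v i a) j b) i *
              ∏ l ∈ Finset.univ.erase i, (Function.update (Function.update v i a) j b) l := by
            rw [Finset.mul_prod_erase _ _ (Finset.mem_univ i)]
          have h2 : ∏ l ∈ Finset.univ.erase i, (Function.update (Function.update v i a) j b) l =
              (Function.update (Function.update v i a) j b) j *
              ∏ l ∈ s, (Function.update (Function.update v i a) j b) l := by
            rw [hs, Finset.mul_prod_erase _ _ (by simp [hji])]
          have h3 : ∏ l ∈ s, (Function.update (Function.update v i a) j b) l = p := by
            rw [hpdef]
            apply Finset.prod_congr rfl
            intro l hl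
            simp only [hs, Finset.mem_erase] at hl
            rw [Function.update_of_ne hl.1, Function.update_of_ne hl.2.1]
          rw [h1, h2, h3, Function.update_of_ne hij, Function.update_self,
            Function.update_self]
          ring
        have hsq : p * p = 1 := by rcases hp with h | h <;> rw [h] <;> norm_num
        have me1 : e1 ∈ Esign n := by
          constructor
          · intro l
            rcases eq_or_ne l j with rfl | hlj
            · rw [he1]; simp only [Function.update_self]; exact hp
            · rcases eq_or_ne l i with rfl | hli
              · rw [he1, Function.update_of_ne hlj, Function.update_self]; left; rfl
              · rw [he1, Function.update_of_ne hlj, Function.update_of_ne hli]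
                exact hother l hli hlj
          · rw [he1, hprod]; linarith [hsq]
        have me2 : e2 ∈ Esign n := by
          constructor
          · intro l
            rcases eq_or_ne l j with rfl | hlj
            · rw [he2]; simp only [Function.update_self]
              rcases hp with h | h <;> rw [h] <;> norm_num
            · rcases eq_or_ne l i with rfl | hli
              · rw [he2, Function.update_of_ne hlj, Function.update_self]; right; rfl
              · rw [he2, Function.update_of_ne hlj, Function.update_of_ne hli]
                exact hother l hli hlj
          · rw [he2, hprod]; linarith [hsq]
        have hcomb : v = (1/2 : ℝ) • e1 + (1/2 : ℝ) • e2 := by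
          funext l
          rcases eq_or_ne l j with rfl | hlj
          · simp only [Pi.add_apply, Pi.smul_apply, he1, he2, Function.update_self, smul_eq_mul]
            rw [hvj]; ring
          · rcases eq_or_ne l i with rfl | hli
            · simp only [Pi.add_apply, Pi.smul_apply, he1, he2, Function.update_of_ne hlj,
                Function.update_self, smul_eq_mul]
              rw [hvi]; ring
            · simp only [Pi.add_apply, Pi.smul_apply, he1, he2, Function.update_of_ne hlj,
                Function.update_of_ne hli, smul_eq_mul]
              ring
        rw [hcomb]
        exact (convex_convexHull ℝ (Esign n)) (subset_convexHull ℝ _ me1)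
          (subset_convexHull ℝ _ me2) (by norm_num) (by norm_num) (by norm_num)


lemma supp_mem (n : ℕ) (v : Fin n → ℝ) (hb : ∀ i, |v i| ≤ 1) (i j : Fin n)
    (hij : i ≠ j) (hvi : v i = 0) (hvj : v j = 0) :
    v ∈ convexHull ℝ (Esign n) := by
  apply signvec_ind n ((Finset.univ.filter (fun l => v l ≠ 1 ∧ v l ≠ -1)).card) v hb _ le_rfl
  have hsub : ({i, j} : Finset (Fin n)) ⊆ Finset.univ.filter (fun l => v l = 0) := by
    intro l hl
    simp only [Finset.mem_insert, Finset.mem_singleton] at hl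
    rcases hl with rfl | rfl <;> simp [hvi, hvj]
  calc 2 = ({i, j} : Finset (Fin n)).card := (Finset.card_pair hij).symm
    _ ≤ _ := Finset.card_le_card hsub

lemma vec_mem (n : ℕ) (hn : 2 < n) (d : Fin n → ℝ)
    (hd : ∑ i, d i ^ 2 ≤ (11/20 : ℝ)^2) : d ∈ convexHull ℝ (Esign n) := by
  obtain h3 | h4 : n = 3 ∨ 4 ≤ n := by omega
  · subst h3
    set t0 : ℝ := 24/25 with ht0
    set w : Fin 3 → (Fin 3 → ℝ) := fun i l => if l = i then
      (if d i = 0 then 0 else t0 * (d i / |d i|)) else 0 with hw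
    set a : Fin 3 → ℝ := fun i => |d i| / t0 with ha
    have hwb : ∀ i l, |w i l| ≤ 1 := by
      intro i l
      rw [hw]
      dsimp only
      split
      · split
        · simp
        · rename_i hdi
          have h1 : abs (d i / abs (d i)) = 1 := by
            rw [abs_div, abs_abs, div_self (abs_ne_zero.mpr hdi)]
          rw [abs_mul, h1, mul_one, ht0, abs_of_nonneg (by norm_num : (0:ℝ) ≤ 24/25)]
          norm_num
      · simp
    have hwm : ∀ i, w i ∈ convexHull ℝ (Esign 3) := by
      intro i
      fin_cases i
      · exact supp_mem 3 _ (hwb 0) 1 2 (by decide) (by simp [hw]) (by simp [hw])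
      · exact supp_mem 3 _ (hwb 1) 0 2 (by decide) (by simp [hw]) (by simp [hw])
      · exact supp_mem 3 _ (hwb 2) 0 1 (by decide) (by simp [hw]) (by simp [hw])
    have h0m : (0 : Fin 3 → ℝ) ∈ convexHull ℝ (Esign 3) := by
      apply supp_mem 3 _ (by intro i; simp) 0 1 (by decide) rfl rfl
    have hd3 : d 0 ^ 2 + d 1 ^ 2 + d 2 ^ 2 ≤ (11/20 : ℝ)^2 := by
      rw [← Fin.sum_univ_three (fun i => d i ^ 2)]; exact hd
    have habs : |d 0| + |d 1| + |d 2| ≤ t0 := by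
      rw [ht0]
      nlinarith [sq_nonneg (|d 0| - |d 1|), sq_nonneg (|d 0| - |d 2|),
        sq_nonneg (|d 1| - |d 2|), sq_abs (d 0), sq_abs (d 1), sq_abs (d 2),
        abs_nonneg (d 0), abs_nonneg (d 1), abs_nonneg (d 2)]
    have key : ∀ i : Fin 3, a i * w i i = d i := by
      intro i
      rw [ha, hw]
      dsimp only
      rw [if_pos rfl]
      rcases eq_or_ne (d i) 0 with h | h
      · simp [h]
      · rw [if_neg h]
        field_simp
    set W : Fin 4 → ℝ := ![a 0, a 1, a 2, 1 - (a 0 + a 1 + a 2)] with hW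
    set Z : Fin 4 → (Fin 3 → ℝ) := ![w 0, w 1, w 2, 0] with hZdef
    have hsum : d = ∑ i : Fin 4, W i • Z i := by
      rw [Fin.sum_univ_four]
      funext l
      simp only [hW, hZdef, Matrix.cons_val_zero, Matrix.cons_val_one, Matrix.head_cons,
        Matrix.cons_val_two, Matrix.tail_cons, Matrix.cons_val_three, Pi.add_apply,
        Pi.smul_apply, smul_eq_mul, Pi.zero_apply, mul_zero, add_zero]
      fin_cases l
      · show d 0 = a 0 * w 0 0 + a 1 * w 1 0 + a 2 * w 2 0
        have e1 : w 1 0 = 0 := by simp [hw]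
        have e2 : w 2 0 = 0 := by simp [hw]
        rw [e1, e2, mul_zero, mul_zero, add_zero, add_zero]
        exact (key 0).symm
      · show d 1 = a 0 * w 0 1 + a 1 * w 1 1 + a 2 * w 2 1
        have e1 : w 0 1 = 0 := by simp [hw]
        have e2 : w 2 1 = 0 := by simp [hw]
        rw [e1, e2, mul_zero, mul_zero, add_zero, zero_add]
        exact (key 1).symm
      · show d 2 = a 0 * w 0 2 + a 1 * w 1 2 + a 2 * w 2 2
        have e1 : w 0 2 = 0 := by simp [hw]
        have e2 : w 1 2 = 0 := by simp [hw]
        rw [e1, e2, mul_zero, mul_zero, zero_add, zero_add]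
        exact (key 2).symm
    have ha0 : ∀ i, 0 ≤ a i := by
      intro i; rw [ha]; positivity
    have halast : 0 ≤ 1 - (a 0 + a 1 + a 2) := by
      have h1 : a 0 + a 1 + a 2 = (|d 0| + |d 1| + |d 2|)/t0 := by
        rw [ha]; dsimp only; ring
      have ht0pos : (0:ℝ) < t0 := by rw [ht0]; norm_num
      have h2 := (div_le_one ht0pos).mpr habs
      rw [h1]
      linarith
    rw [hsum]
    apply (convex_convexHull ℝ (Esign 3)).sum_mem
    · intro i _
      fin_cases i <;>
        simp only [hW, Matrix.cons_val_zero, Matrix.cons_val_one, Matrix.head_cons,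
          Matrix.cons_val_two, Matrix.tail_cons, Matrix.cons_val_three]
      · exact ha0 0
      · exact ha0 1
      · exact ha0 2
      · exact halast
    · rw [Fin.sum_univ_four]
      simp only [hW, Matrix.cons_val_zero, Matrix.cons_val_one, Matrix.head_cons,
        Matrix.cons_val_two, Matrix.tail_cons, Matrix.cons_val_three]
      ring
    · intro i _
      fin_cases i <;>
        simp only [hZdef, Matrix.cons_val_zero, Matrix.cons_val_one, Matrix.head_cons,
          Matrix.cons_val_two, Matrix.tail_cons, Matrix.cons_val_three]
      · exact hwm 0
      · exact hwm 1
      · exact hwm 2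
      · exact h0m
  · -- n ≥ 4 : two-block scheme
    classical
    set dA : Fin n → ℝ := fun i => if (i : ℕ) < 2 then d i else 0 with hdA
    set dB : Fin n → ℝ := fun i => if (i : ℕ) < 2 then 0 else d i with hdB
    have hsplit : ∀ i, dA i + dB i = d i := by
      intro i; rw [hdA, hdB]; dsimp only; split <;> simp
    have hsq : ∀ i, dA i ^ 2 + dB i ^ 2 = d i ^ 2 := by
      intro i; rw [hdA, hdB]; dsimp only; split <;> simp
    set SA : ℝ := ∑ i, dA i ^ 2 with hSAdef
    set SB : ℝ := ∑ i, dB i ^ 2 with hSBdef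
    have hSA0 : 0 ≤ SA := Finset.sum_nonneg fun i _ => sq_nonneg _
    have hSB0 : 0 ≤ SB := Finset.sum_nonneg fun i _ => sq_nonneg _
    have hS : SA + SB ≤ (11/20 : ℝ)^2 := by
      rw [hSAdef, hSBdef, ← Finset.sum_add_distrib]
      calc ∑ i, (dA i ^ 2 + dB i ^ 2) = ∑ i, d i ^ 2 :=
            Finset.sum_congr rfl fun i _ => hsq i
        _ ≤ _ := hd
    set a : ℝ := Real.sqrt SA with hadef
    set b : ℝ := Real.sqrt SB with hbdef
    have ha2 : a ^ 2 = SA := Real.sq_sqrt hSA0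
    have hb2 : b ^ 2 = SB := Real.sq_sqrt hSB0
    have ha0 : 0 ≤ a := Real.sqrt_nonneg _
    have hb0 : 0 ≤ b := Real.sqrt_nonneg _
    have habsA : ∀ i, |dA i| ≤ a := by
      intro i
      rw [hadef, ← Real.sqrt_sq_eq_abs]
      exact Real.sqrt_le_sqrt (Finset.single_le_sum (fun j _ => sq_nonneg (dA j))
        (Finset.mem_univ i))
    have habsB : ∀ i, |dB i| ≤ b := by
      intro i
      rw [hbdef, ← Real.sqrt_sq_eq_abs]
      exact Real.sqrt_le_sqrt (Finset.single_le_sum (fun j _ => sq_nonneg (dB j))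
        (Finset.mem_univ i))
    have hAzero : a = 0 → ∀ i, dA i = 0 := by
      intro h i
      have : SA = 0 := by rw [← ha2, h]; norm_num
      have := (Finset.sum_eq_zero_iff_of_nonneg
        (fun j (_ : j ∈ Finset.univ) => sq_nonneg (dA j))).mp this i (Finset.mem_univ i)
      exact (pow_eq_zero_iff two_ne_zero).mp this
    have hBzero : b = 0 → ∀ i, dB i = 0 := by
      intro h i
      have : SB = 0 := by rw [← hb2, h]; norm_num
      have := (Finset.sum_eq_zero_iff_of_nonneg
        (fun j (_ : j ∈ Finset.univ) => sq_nonneg (dB j))).mp this i (Finset.mem_univ i)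
      exact (pow_eq_zero_iff two_ne_zero).mp this
    set uA : Fin n → ℝ := if a = 0 then 0 else a⁻¹ • dA with huA
    set uB : Fin n → ℝ := if b = 0 then 0 else b⁻¹ • dB with huB
    have keyA : ∀ i, a * uA i = dA i := by
      intro i
      rw [huA]
      split
      · rename_i h; simp [hAzero h i]
      · rename_i h
        simp only [Pi.smul_apply, smul_eq_mul]
        field_simp
    have keyB : ∀ i, b * uB i = dB i := by
      intro i
      rw [huB]
      split
      · rename_i h; simp [hBzero h i]
      · rename_i h
        simp only [Pi.smul_apply, smul_eq_mul]
        field_simp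
    have hbuA : ∀ i, |uA i| ≤ 1 := by
      intro i
      rw [huA]
      split
      · simp
      · rename_i h
        have hap : 0 < a := lt_of_le_of_ne ha0 (Ne.symm h)
        simp only [Pi.smul_apply, smul_eq_mul, abs_mul, abs_inv, abs_of_pos hap]
        rw [inv_mul_le_iff₀ hap, mul_one]
        exact habsA i
    have hbuB : ∀ i, |uB i| ≤ 1 := by
      intro i
      rw [huB]
      split
      · simp
      · rename_i h
        have hbp : 0 < b := lt_of_le_of_ne hb0 (Ne.symm h)
        simp only [Pi.smul_apply, smul_eq_mul, abs_mul, abs_inv, abs_of_pos hbp]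
        rw [inv_mul_le_iff₀ hbp, mul_one]
        exact habsB i
    have hi2 : ((⟨2, by omega⟩ : Fin n) : ℕ) = 2 := rfl
    have muA : uA ∈ convexHull ℝ (Esign n) := by
      apply supp_mem n uA hbuA ⟨2, by omega⟩ ⟨3, by omega⟩
      · intro h
        have := congrArg Fin.val h
        simp at this
      · have hz : dA ⟨2, by omega⟩ = 0 := by rw [hdA]; simp
        rw [huA]; split
        · simp
        · simp [hz]
      · have hz : dA ⟨3, by omega⟩ = 0 := by rw [hdA]; simp
        rw [huA]; split
        · simp
        · simp [hz]
    have muB : uB ∈ convexHull ℝ (Esign n) := by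
      apply supp_mem n uB hbuB ⟨0, by omega⟩ ⟨1, by omega⟩
      · intro h
        have := congrArg Fin.val h
        simp at this
      · have hz : dB ⟨0, by omega⟩ = 0 := by rw [hdB]; simp
        rw [huB]; split
        · simp
        · simp [hz]
      · have hz : dB ⟨1, by omega⟩ = 0 := by rw [hdB]; simp
        rw [huB]; split
        · simp
        · simp [hz]
    have m0 : (0 : Fin n → ℝ) ∈ convexHull ℝ (Esign n) := by
      apply supp_mem n 0 (by intro i; simp) ⟨0, by omega⟩ ⟨1, by omega⟩ _ rfl rfl
      intro h
      have := congrArg Fin.val h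
      simp at this
    have hab1 : a + b ≤ 1 := by
      nlinarith [sq_nonneg (a - b), sq_nonneg (a + b - 1)]
    set W : Fin 3 → ℝ := ![a, b, 1 - (a + b)] with hW
    set Z : Fin 3 → (Fin n → ℝ) := ![uA, uB, 0] with hZdef
    have hsum : d = ∑ i : Fin 3, W i • Z i := by
      rw [Fin.sum_univ_three]
      funext i
      simp only [hW, hZdef, Matrix.cons_val_zero, Matrix.cons_val_one, Matrix.head_cons,
        Matrix.cons_val_two, Matrix.tail_cons, Pi.add_apply, Pi.smul_apply, smul_eq_mul,
        Pi.zero_apply, mul_zero, add_zero]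
      rw [keyA i, keyB i, hsplit i]
    rw [hsum]
    apply (convex_convexHull ℝ (Esign n)).sum_mem
    · intro i _
      fin_cases i <;>
        simp only [hW, Matrix.cons_val_zero, Matrix.cons_val_one, Matrix.head_cons,
          Matrix.cons_val_two, Matrix.tail_cons]
      · exact ha0
      · exact hb0
      · show (0:ℝ) ≤ 1 - (a + b)
        linarith
    · rw [Fin.sum_univ_three]
      simp only [hW, Matrix.cons_val_zero, Matrix.cons_val_one, Matrix.head_cons,
        Matrix.cons_val_two, Matrix.tail_cons]
      ring
    · intro i _
      fin_cases i <;>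
        simp only [hZdef, Matrix.cons_val_zero, Matrix.cons_val_one, Matrix.head_cons,
          Matrix.cons_val_two, Matrix.tail_cons]
      · exact muA
      · exact muB
      · show (0 : Fin n → ℝ) ∈ convexHull ℝ (Esign n)
        exact m0


lemma SO_mul {n : ℕ} {A B : Matrix (Fin n) (Fin n) ℝ} (hA : A ∈ SOset n) (hB : B ∈ SOset n) :
    A * B ∈ SOset n := by
  obtain ⟨hA1, hA2⟩ := hA
  obtain ⟨hB1, hB2⟩ := hB
  constructor
  · rw [transpose_mul]
    calc Bᵀ * Aᵀ * (A * B) = Bᵀ * (Aᵀ * A) * B := by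
          rw [Matrix.mul_assoc, Matrix.mul_assoc, Matrix.mul_assoc]
      _ = Bᵀ * B := by rw [hA1, Matrix.mul_one]
      _ = 1 := hB1
  · rw [det_mul, hA2, hB2, one_mul]

lemma SO_transpose {n : ℕ} {A : Matrix (Fin n) (Fin n) ℝ} (hA : A ∈ SOset n) :
    Aᵀ ∈ SOset n := by
  obtain ⟨hA1, hA2⟩ := hA
  refine ⟨?_, by rw [det_transpose]; exact hA2⟩
  rw [transpose_transpose]
  exact mul_eq_one_comm.mp hA1

lemma diag_sign_SO {n : ℕ} {v : Fin n → ℝ} (hv : v ∈ Esign n) :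
    diagonal v ∈ SOset n := by
  obtain ⟨h1, h2⟩ := hv
  constructor
  · rw [diagonal_transpose, diagonal_mul_diagonal, ← diagonal_one]
    have : (fun i => v i * v i) = fun _ => (1:ℝ) := by
      funext i
      rcases h1 i with h | h <;> rw [h] <;> norm_num
    rw [this]
  · rw [det_diagonal]; exact h2

/-- If `U, V ∈ SO(n)` and `d` is in the hull of even sign vectors, then
`U * diagonal d * Vᵀ` is in the hull of `SO(n)`. -/
lemma sandwich_mem {n : ℕ} {U V : Matrix (Fin n) (Fin n) ℝ} (hU : U ∈ SOset n)
    (hV : V ∈ SOset n) {d : Fin n → ℝ} (hd : d ∈ convexHull ℝ (Esign n)) :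
    U * diagonal d * Vᵀ ∈ convexHull ℝ (SOset n) := by
  classical
  set T : (Fin n → ℝ) →ₗ[ℝ] Matrix (Fin n) (Fin n) ℝ :=
    { toFun := fun v => U * diagonal v * Vᵀ
      map_add' := by
        intro v w
        have : diagonal (v + w) = diagonal v + diagonal w := by
          rw [diagonal_add]; rfl
        rw [this, Matrix.mul_add, Matrix.add_mul]
      map_smul' := by
        intro c v
        rw [diagonal_smul, RingHom.id_apply, Matrix.mul_smul, Matrix.smul_mul] } with hT
  have himg : T '' (Esign n) ⊆ SOset n := by
    rintro _ ⟨v, hv, rfl⟩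
    exact SO_mul (SO_mul hU (diag_sign_SO hv)) (SO_transpose hV)
  have : T d ∈ T '' (convexHull ℝ (Esign n)) := Set.mem_image_of_mem _ hd
  rw [T.image_convexHull] at this
  exact convexHull_mono himg this


lemma inv_case (n : ℕ) (hn : 2 < n) (y : Matrix (Fin n) (Fin n) ℝ) (hy : y.det ≠ 0)
    (hnorm : ∑ i, ∑ j, (y i j)^2 ≤ (11/20 : ℝ)^2) : y ∈ convexHull ℝ (SOset n) := by
  classical
  set M : Matrix (Fin n) (Fin n) ℝ := yᵀ * y with hMdef
  have hM : M.IsHermitian := by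
    have := Matrix.isHermitian_conjTranspose_mul_self y
    exact this
  have hPSD : M.PosSemidef := by
    have h1 : yᴴ = yᵀ := by ext i j; simp [conjTranspose_apply]
    have := Matrix.posSemidef_conjTranspose_mul_self y
    rwa [h1] at this
  set μ : Fin n → ℝ := hM.eigenvalues with hμdef
  have hμ0 : ∀ i, 0 ≤ μ i := hPSD.eigenvalues_nonneg
  set W : Matrix (Fin n) (Fin n) ℝ := (hM.eigenvectorUnitary : Matrix (Fin n) (Fin n) ℝ)
    with hWdef
  have hstar : (star W) = Wᵀ := by ext i j; simp [conjTranspose_apply]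
  have hWu : Wᵀ * W = 1 ∧ W * Wᵀ = 1 := by
    have h := (hM.eigenvectorUnitary).2
    rw [Matrix.mem_unitaryGroup_iff'] at h
    rw [hWdef] at hstar ⊢
    rw [hstar] at h
    exact ⟨h, mul_eq_one_comm.mp h⟩
  have hspec : M = W * diagonal μ * Wᵀ := by
    have hspec0 := hM.spectral_theorem
    have h2 : diagonal (RCLike.ofReal ∘ hM.eigenvalues) = diagonal hM.eigenvalues := by
      ext i j; simp [diagonal]
    simp only [← hWdef, hstar, h2] at hspec0
    exact hspec0
  -- eigenvalues are nonzero
  have hdetM : M.det ≠ 0 := by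
    rw [hMdef, det_mul, det_transpose]
    exact mul_ne_zero hy hy
  have hμne : ∀ i, μ i ≠ 0 := by
    intro i hi
    apply hdetM
    rw [hM.det_eq_prod_eigenvalues]
    refine Finset.prod_eq_zero (Finset.mem_univ i) ?_
    rw [← hμdef, hi]
    norm_num
  have hμpos : ∀ i, 0 < μ i := fun i => lt_of_le_of_ne (hμ0 i) (Ne.symm (hμne i))
  set d : Fin n → ℝ := fun i => Real.sqrt (μ i) with hddef
  have hdpos : ∀ i, 0 < d i := fun i => Real.sqrt_pos.mpr (hμpos i)
  have hdd : ∀ i, d i * d i = μ i := fun i => Real.mul_self_sqrt (hμ0 i)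
  set D : Matrix (Fin n) (Fin n) ℝ := diagonal d with hDdef
  set Dinv : Matrix (Fin n) (Fin n) ℝ := diagonal (fun i => (d i)⁻¹) with hDinvdef
  have hDiD : Dinv * D = 1 := by
    rw [hDinvdef, hDdef, diagonal_mul_diagonal,
      show (fun i => (d i)⁻¹ * d i) = fun _ => (1:ℝ) from
        funext fun i => inv_mul_cancel₀ (hdpos i).ne', diagonal_one]
  have hDDi : D * Dinv = 1 := by
    rw [hDdef, hDinvdef, diagonal_mul_diagonal,
      show (fun i => d i * (d i)⁻¹) = fun _ => (1:ℝ) from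
        funext fun i => mul_inv_cancel₀ (hdpos i).ne', diagonal_one]
  set U : Matrix (Fin n) (Fin n) ℝ := y * W * Dinv with hUdef
  have hDinvT : Dinvᵀ = Dinv := by rw [hDinvdef, diagonal_transpose]
  have hkey : Wᵀ * (yᵀ * y) * W = diagonal μ := by
    rw [← hMdef, hspec]
    calc Wᵀ * (W * diagonal μ * Wᵀ) * W = (Wᵀ * W) * diagonal μ * (Wᵀ * W) := by
          noncomm_ring
      _ = diagonal μ := by rw [hWu.1, Matrix.one_mul, Matrix.mul_one]
  have hUtU : Uᵀ * U = 1 := by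
    rw [hUdef, transpose_mul, transpose_mul, hDinvT]
    calc Dinv * (Wᵀ * yᵀ) * (y * W * Dinv)
        = Dinv * (Wᵀ * (yᵀ * y) * W) * Dinv := by noncomm_ring
      _ = Dinv * diagonal μ * Dinv := by rw [hkey]
      _ = 1 := by
          rw [hDinvdef, diagonal_mul_diagonal, diagonal_mul_diagonal,
            show (fun i => (d i)⁻¹ * μ i * (d i)⁻¹) = fun _ => (1:ℝ) from ?_, diagonal_one]
          funext i
          rw [← hdd i]
          field_simp
          exact div_self (hdpos i).ne'
  have hyUDW : y = U * D * Wᵀ := by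
    rw [hUdef]
    calc y = y * (W * Wᵀ) := by rw [hWu.2, Matrix.mul_one]
      _ = y * W * (Dinv * D) * Wᵀ := by rw [hDiD, Matrix.mul_one]; noncomm_ring
      _ = y * W * Dinv * D * Wᵀ := by noncomm_ring
  have hdetU : U.det * U.det = 1 := by
    have h := congrArg Matrix.det hUtU
    rwa [det_mul, det_transpose, det_one] at h
  have hdetW : W.det * W.det = 1 := by
    have h := congrArg Matrix.det hWu.1
    rwa [det_mul, det_transpose, det_one] at h
  set i0 : Fin n := ⟨0, by omega⟩ with hi0
  set f : Fin n → ℝ := fun i => if i = i0 then U.det else 1 with hfdef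
  set g : Fin n → ℝ := fun i => if i = i0 then W.det else 1 with hgdef
  set F : Matrix (Fin n) (Fin n) ℝ := diagonal f with hFdef
  set G : Matrix (Fin n) (Fin n) ℝ := diagonal g with hGdef
  have hFF : F * F = 1 := by
    rw [hFdef, diagonal_mul_diagonal,
      show (fun i => f i * f i) = fun _ => (1:ℝ) from ?_, diagonal_one]
    funext i
    rw [hfdef]
    dsimp only
    by_cases h : i = i0 <;> simp [h, hdetU]
  have hGG : G * G = 1 := by
    rw [hGdef, diagonal_mul_diagonal,
      show (fun i => g i * g i) = fun _ => (1:ℝ) from ?_, diagonal_one]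
    funext i
    rw [hgdef]
    dsimp only
    by_cases h : i = i0 <;> simp [h, hdetW]
  have hdetF : F.det = U.det := by
    rw [hFdef, det_diagonal, hfdef]
    rw [Finset.prod_eq_single i0 (fun j _ hj => by simp [hj]) (fun h => absurd (Finset.mem_univ i0) h)]
    simp
  have hdetG : G.det = W.det := by
    rw [hGdef, det_diagonal, hgdef]
    rw [Finset.prod_eq_single i0 (fun j _ hj => by simp [hj]) (fun h => absurd (Finset.mem_univ i0) h)]
    simp
  have hFT : Fᵀ = F := by rw [hFdef, diagonal_transpose]
  have hGT : Gᵀ = G := by rw [hGdef, diagonal_transpose]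
  set U' : Matrix (Fin n) (Fin n) ℝ := U * F with hU'def
  set V' : Matrix (Fin n) (Fin n) ℝ := W * G with hV'def
  have hU'SO : U' ∈ SOset n := by
    constructor
    · rw [hU'def, transpose_mul, hFT]
      calc F * Uᵀ * (U * F) = F * (Uᵀ * U) * F := by noncomm_ring
        _ = F * F := by rw [hUtU, Matrix.mul_one]
        _ = 1 := hFF
    · rw [hU'def, det_mul, hdetF]
      exact hdetU
  have hV'SO : V' ∈ SOset n := by
    constructor
    · rw [hV'def, transpose_mul, hGT]
      calc G * Wᵀ * (W * G) = G * (Wᵀ * W) * G := by noncomm_ring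
        _ = G * G := by rw [hWu.1, Matrix.mul_one]
        _ = 1 := hGG
    · rw [hV'def, det_mul, hdetG]
      exact hdetW
  set d' : Fin n → ℝ := fun i => f i * d i * g i with hd'def
  have hFDG : F * D * G = diagonal d' := by
    rw [hFdef, hDdef, hGdef, diagonal_mul_diagonal, diagonal_mul_diagonal, hd'def]
  have hyfinal : y = U' * diagonal d' * V'ᵀ := by
    rw [hU'def, hV'def, ← hFDG, transpose_mul, hGT]
    calc y = U * D * Wᵀ := hyUDW
      _ = U * (F * F) * D * (G * G) * Wᵀ := by rw [hFF, hGG, Matrix.mul_one, Matrix.mul_one]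
      _ = U * F * (F * D * G) * (G * Wᵀ) := by noncomm_ring
  have htr : ∑ i, d' i ^ 2 ≤ (11/20 : ℝ)^2 := by
    have h1 : ∀ i, d' i ^ 2 = μ i := by
      intro i
      rw [hd'def]
      dsimp only
      rw [hfdef, hgdef]
      dsimp only
      split
      · have e : ∀ (a b c : ℝ), (a * c * b)^2 = (a*a) * (b*b) * (c*c) := by intros; ring
        rw [e, hdetU, hdetW, one_mul, one_mul, hdd i]
      · rw [one_mul, mul_one, pow_two, hdd i]
    have h2 : ∑ i, d' i ^ 2 = ∑ i, μ i := Finset.sum_congr rfl fun i _ => h1 i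
    have h3 : ∑ i, μ i = M.trace := by
      have ht : M.trace = (W * diagonal μ * Wᵀ).trace := by rw [← hspec]
      rw [ht, trace_mul_cycle, hWu.1, Matrix.one_mul, trace_diagonal]
    have h4 : M.trace = ∑ i, ∑ j, (y i j)^2 := by
      have hdiag : ∀ j, M.diag j = ∑ i, (y i j)^2 := by
        intro j
        rw [Matrix.diag_apply, hMdef, Matrix.mul_apply]
        apply Finset.sum_congr rfl
        intro i _
        rw [transpose_apply, pow_two]
      rw [Matrix.trace, Finset.sum_congr rfl (fun j _ => hdiag j), Finset.sum_comm]
    rw [h2, h3, h4]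
    exact hnorm
  rw [hyfinal]
  exact sandwich_mem hU'SO hV'SO (vec_mem n hn d' htr)


lemma my_eval_charpoly {m : Type*} [DecidableEq m] [Fintype m] (M : Matrix m m ℝ) (t : ℝ) :
    M.charpoly.eval t = (Matrix.scalar m t - M).det := by
  rw [Matrix.charpoly, eval_det, Matrix.matPolyEquiv_charmatrix]
  simp

lemma lower_case (n : ℕ) (hn : 2 < n) (x : Matrix (Fin n) (Fin n) ℝ)
    (hx : Real.sqrt (∑ i, ∑ j, (x i j) ^ 2) ≤ 1 / 2) :
    x ∈ convexHull ℝ (SOset n) := by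
  classical
  have hs0 : (0:ℝ) ≤ ∑ i, ∑ j, (x i j) ^ 2 := by positivity
  have hsum : ∑ i, ∑ j, (x i j) ^ 2 ≤ 1/4 := by
    nlinarith [Real.sq_sqrt hs0, Real.sqrt_nonneg (∑ i, ∑ j, (x i j) ^ 2)]
  have hdiag : ∀ i : Fin n, (x i i) ^ 2 ≤ 1/4 := by
    intro i
    calc (x i i)^2 ≤ ∑ j, (x i j)^2 :=
          Finset.single_le_sum (fun j _ => sq_nonneg (x i j)) (Finset.mem_univ i)
      _ ≤ ∑ i, ∑ j, (x i j)^2 :=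
          Finset.single_le_sum (fun i _ => Finset.sum_nonneg fun j _ => sq_nonneg (x i j))
            (Finset.mem_univ i)
      _ ≤ 1/4 := hsum
  have habs : ∀ i : Fin n, |x i i| ≤ 1/2 := by
    intro i
    nlinarith [sq_abs (x i i), abs_nonneg (x i i), hdiag i]
  set ε0 : ℝ := 1/(40 * n) with hε0def
  have hnR : (3:ℝ) ≤ (n:ℝ) := by exact_mod_cast hn
  have hε0 : 0 < ε0 := by rw [hε0def]; positivity
  have hp1 : (-x).charpoly ≠ 0 := (Matrix.charpoly_monic _).ne_zero
  have hp2 : x.charpoly ≠ 0 := (Matrix.charpoly_monic _).ne_zero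
  have hbadfin : ({t | IsRoot (-x).charpoly t} ∪ {t | IsRoot x.charpoly t}).Finite :=
    (Polynomial.finite_setOf_isRoot hp1).union (Polynomial.finite_setOf_isRoot hp2)
  have hIoo : (Set.Ioo (0:ℝ) ε0).Infinite := Set.Ioo_infinite hε0
  obtain ⟨ε, hεmem⟩ := (hIoo.diff hbadfin).nonempty
  obtain ⟨⟨hεpos, hεlt⟩, hεnr⟩ := hεmem
  rw [Set.mem_union] at hεnr
  push_neg at hεnr
  obtain ⟨hr1, hr2⟩ := hεnr
  -- the two perturbed matrices
  set z1 : Matrix (Fin n) (Fin n) ℝ := x + ε • (1 : Matrix (Fin n) (Fin n) ℝ) with hz1def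
  set z2 : Matrix (Fin n) (Fin n) ℝ := x - ε • (1 : Matrix (Fin n) (Fin n) ℝ) with hz2def
  have hdet1 : z1.det ≠ 0 := by
    have h1 : Matrix.scalar (Fin n) ε - (-x) = z1 := by
      rw [hz1def]
      ext i j
      by_cases h : i = j <;>
        simp [Matrix.scalar_apply, Matrix.sub_apply, Matrix.add_apply, Matrix.smul_apply,
          Matrix.one_apply, h, add_comm]
    intro hd
    apply hr1
    show (-x).charpoly.IsRoot ε
    rw [Polynomial.IsRoot.def, my_eval_charpoly, h1]
    exact hd
  have hdet2 : z2.det ≠ 0 := by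
    have h1 : Matrix.scalar (Fin n) ε - x = -z2 := by
      rw [hz2def]
      ext i j
      by_cases h : i = j <;>
        simp [Matrix.scalar_apply, Matrix.sub_apply, Matrix.neg_apply, Matrix.smul_apply,
          Matrix.one_apply, h]
    intro hd
    apply hr2
    show x.charpoly.IsRoot ε
    rw [Polynomial.IsRoot.def, my_eval_charpoly, h1, Matrix.det_neg, hd, mul_zero]
  -- entry formulas
  have hε40 : ε * (40 * n) < 1 := by
    calc ε * (40 * n) < ε0 * (40 * n) := by
          apply mul_lt_mul_of_pos_right hεlt (by positivity)
      _ = 1 := by rw [hε0def]; field_simp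
  have hεn : ε * n ≤ 1/40 := by nlinarith
  have hε1 : ε ≤ 1 := by nlinarith
  have hnormbound : ∀ (s : ℝ), s = 1 ∨ s = -1 →
      ∑ i, ∑ j, ((x + (s * ε) • (1 : Matrix (Fin n) (Fin n) ℝ)) i j)^2 ≤ (11/20 : ℝ)^2 := by
    intro s hs
    have hkey : ∀ i : Fin n, ∑ j, ((x + (s * ε) • (1 : Matrix (Fin n) (Fin n) ℝ)) i j)^2
        = (∑ j, (x i j)^2) + (2*(s*ε)*(x i i) + ε^2) := by
      intro i
      have hterm : ∀ j, ((x + (s * ε) • (1 : Matrix (Fin n) (Fin n) ℝ)) i j)^2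
          = (x i j)^2 + (if i = j then 2*(s*ε)*(x i i) + ε^2 else 0) := by
        intro j
        have happ : (x + (s * ε) • (1 : Matrix (Fin n) (Fin n) ℝ)) i j
            = x i j + (s*ε) * (if i = j then 1 else 0) := by
          simp [Matrix.add_apply, Matrix.smul_apply, Matrix.one_apply]
        rw [happ]
        by_cases h : i = j
        · subst h
          rw [if_pos rfl, if_pos rfl]
          have hs2 : s^2 = 1 := by rcases hs with rfl | rfl <;> norm_num
          nlinarith [hs2]
        · rw [if_neg h, if_neg h]
          ring
      rw [Finset.sum_congr rfl (fun j _ => hterm j), Finset.sum_add_distrib,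
        Finset.sum_ite_eq Finset.univ i (fun _ => 2*(s*ε)*(x i i) + ε^2)]
      simp
    rw [Finset.sum_congr rfl (fun i _ => hkey i), Finset.sum_add_distrib]
    have hbound : ∑ i : Fin n, (2*(s*ε)*(x i i) + ε^2) ≤ 2/40 := by
      have hone : ∀ i : Fin n, 2*(s*ε)*(x i i) + ε^2 ≤ 2*ε*(1/2) + ε^2 := by
        intro i
        have h1 : s * (x i i) ≤ 1/2 := by
          rcases hs with rfl | rfl
          · rw [one_mul]; exact (abs_le.mp (habs i)).2
          · rw [neg_one_mul]; linarith [(abs_le.mp (habs i)).1]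
        nlinarith [hεpos]
      calc ∑ i : Fin n, (2*(s*ε)*(x i i) + ε^2) ≤ ∑ _i : Fin n, (2*ε*(1/2) + ε^2) :=
            Finset.sum_le_sum fun i _ => hone i
        _ = n * (ε + ε^2) := by rw [Finset.sum_const, Finset.card_univ, Fintype.card_fin]; ring
        _ ≤ 2/40 := by nlinarith
    have := hsum
    nlinarith [hbound]
  have hm1 : z1 ∈ convexHull ℝ (SOset n) := by
    apply inv_case n hn z1 hdet1
    have := hnormbound 1 (Or.inl rfl)
    rwa [one_mul] at this
  have hm2 : z2 ∈ convexHull ℝ (SOset n) := by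
    apply inv_case n hn z2 hdet2
    have := hnormbound (-1) (Or.inr rfl)
    rw [hz2def]
    convert this using 4
    rw [neg_one_mul, neg_smul, sub_eq_add_neg]
  have hcomb : x = (1/2 : ℝ) • z1 + (1/2 : ℝ) • z2 := by
    rw [hz1def, hz2def]
    ext i j
    simp only [Matrix.add_apply, Matrix.smul_apply, Matrix.sub_apply, smul_eq_mul]
    ring
  rw [hcomb]
  exact (convex_convexHull ℝ (SOset n)) hm1 hm2 (by norm_num) (by norm_num) (by norm_num)


lemma upper_case (n : ℕ) : ∀ x ∈ convexHull ℝ (SOset n), frobNorm x ≤ Real.sqrt n := by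
  classical
  set f : Matrix (Fin n) (Fin n) ℝ →ₗ[ℝ] EuclideanSpace ℝ (Fin n × Fin n) :=
    { toFun := fun x => (WithLp.equiv 2 _).symm (fun p => x p.1 p.2)
      map_add' := fun x y => rfl
      map_smul' := fun c x => rfl } with hf
  have hnorm : ∀ x : Matrix (Fin n) (Fin n) ℝ, frobNorm x = ‖f x‖ := by
    intro x
    rw [EuclideanSpace.norm_eq, frobNorm]
    congr 1
    rw [Fintype.sum_prod_type]
    apply Finset.sum_congr rfl
    intro i _
    apply Finset.sum_congr rfl
    intro j _
    rw [Real.norm_eq_abs, sq_abs]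
    rfl
  have hconv : Convex ℝ {x : Matrix (Fin n) (Fin n) ℝ | frobNorm x ≤ Real.sqrt n} := by
    intro x hx y hy a b ha hb hab
    simp only [Set.mem_setOf_eq] at hx hy ⊢
    rw [hnorm] at hx hy ⊢
    calc ‖f (a • x + b • y)‖ = ‖a • f x + b • f y‖ := by rw [map_add, _root_.map_smul, _root_.map_smul]
      _ ≤ ‖a • f x‖ + ‖b • f y‖ := norm_add_le _ _
      _ = a * ‖f x‖ + b * ‖f y‖ := by
          rw [norm_smul, norm_smul, Real.norm_eq_abs, Real.norm_eq_abs,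
            abs_of_nonneg ha, abs_of_nonneg hb]
      _ ≤ a * Real.sqrt n + b * Real.sqrt n := by
          apply add_le_add (mul_le_mul_of_nonneg_left hx ha) (mul_le_mul_of_nonneg_left hy hb)
      _ = Real.sqrt n := by rw [← add_mul, hab, one_mul]
  have hsub : SOset n ⊆ {x : Matrix (Fin n) (Fin n) ℝ | frobNorm x ≤ Real.sqrt n} := by
    intro R hR
    obtain ⟨h1, _⟩ := hR
    simp only [Set.mem_setOf_eq]
    rw [frobNorm]
    apply Real.sqrt_le_sqrt
    have hcol : ∀ j : Fin n, ∑ i, (R i j)^2 = 1 := by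
      intro j
      have := congrFun (congrFun h1 j) j
      rw [Matrix.mul_apply, Matrix.one_apply_eq] at this
      rw [← this]
      apply Finset.sum_congr rfl
      intro i _
      rw [transpose_apply, pow_two]
    rw [Finset.sum_comm]
    rw [Finset.sum_congr rfl (fun j (_ : j ∈ Finset.univ) => hcol j), Finset.sum_const,
      Finset.card_univ, Fintype.card_fin, nsmul_eq_mul, mul_one]
  exact fun x hx => convexHull_min hsub hconv hx


/-- For `n > 2`, the convex hull of `SO(n)` contains the Frobenius ball of
radius `1/2` and is contained in the Frobenius ball of radius `√n`. -/
theorem convexHull_SO_ball_sandwich (n : ℕ) (hn : 2 < n) :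
    (∀ x : Matrix (Fin n) (Fin n) ℝ, frobNorm x ≤ 1 / 2 →
        x ∈ convexHull ℝ (SOset n)) ∧
      ∀ x ∈ convexHull ℝ (SOset n), frobNorm x ≤ Real.sqrt n := by
  constructor
  · intro x hx
    rw [frobNorm] at hx
    exact lower_case n hn x hx
  · exact upper_case n
end

section
/- Let Ξ(y,z) := diag(y) + U(z) + U(z)ᵀ for y ∈ ℝ^n, z ∈ ℝ^{n(n−1)/2}, with U(z) the strictly upper-triangular matrix built from z. With c := I_n/2, the set C := {(y,z) : c + Ξ(y,z) ⪰ 0 and y_i ≤ 1/2 for all i} (reparametrizing PSD matrices with diagonal entries in [0,1]) satisfies B(1/4) ⊆ C ⊆ B(n^{3/2}) for the norm ‖(y,z)‖ = ‖y‖ + ‖z‖. -/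
/-- Index type for the strictly-upper-triangular entries of an `n × n` matrix:
there are `n(n−1)/2` of them. -/
abbrev StrictUpperIdx (n : ℕ) := {p : Fin n × Fin n // p.1 < p.2}

/-- `U(z)`: the strictly upper-triangular matrix built coordinatewise from `z`. -/
noncomputable def Umat {n : ℕ} (z : EuclideanSpace ℝ (StrictUpperIdx n)) :
    Matrix (Fin n) (Fin n) ℝ :=
  fun i j => if h : i < j then z ⟨(i, j), h⟩ else 0

/-- `Ξ(y, z) = diag(y) + U(z) + U(z)ᵀ`. -/
noncomputable def XiMat {n : ℕ} (y : EuclideanSpace ℝ (Fin n))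
    (z : EuclideanSpace ℝ (StrictUpperIdx n)) : Matrix (Fin n) (Fin n) ℝ :=
  Matrix.diagonal (fun i : Fin n => y i) + Umat z + (Umat z).transpose

section Helpers
open Matrix

lemma norm_sq_eq {ι : Type*} [Fintype ι] (x : EuclideanSpace ℝ ι) :
    ‖x‖ ^ 2 = ∑ i, (x i) ^ 2 := by
  rw [EuclideanSpace.norm_eq, Real.sq_sqrt (by positivity)]
  simp [sq_abs]

lemma sum_U {n : ℕ} (z : EuclideanSpace ℝ (StrictUpperIdx n)) (f : Fin n → Fin n → ℝ) :
    ∑ i, ∑ j, Umat z i j * f i j = ∑ p : StrictUpperIdx n, z p * f p.1.1 p.1.2 := by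
  have h2 := Finset.sum_subtype (p := fun q : Fin n × Fin n => q.1 < q.2)
      (F := inferInstanceAs (Fintype (StrictUpperIdx n)))
      (Finset.univ.filter (fun q : Fin n × Fin n => q.1 < q.2))
      (by simp) (fun q : Fin n × Fin n => Umat z q.1 q.2 * f q.1 q.2)
  rw [Finset.sum_filter] at h2
  rw [show (∑ i, ∑ j, Umat z i j * f i j)
      = ∑ q : Fin n × Fin n, Umat z q.1 q.2 * f q.1 q.2 from
    (Fintype.sum_prod_type (fun q : Fin n × Fin n => Umat z q.1 q.2 * f q.1 q.2)).symm]
  rw [show (∑ q : Fin n × Fin n, Umat z q.1 q.2 * f q.1 q.2)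
      = ∑ q : Fin n × Fin n, if q.1 < q.2 then Umat z q.1 q.2 * f q.1 q.2 else 0 by
    apply Finset.sum_congr rfl; intro q _
    by_cases h : q.1 < q.2 <;> simp [Umat, h]]
  rw [h2]
  apply Finset.sum_congr rfl
  intro p _
  have hp : p.1.1 < p.1.2 := p.2
  simp [Umat, hp]

lemma quad_eq {n : ℕ} (y : EuclideanSpace ℝ (Fin n)) (z : EuclideanSpace ℝ (StrictUpperIdx n))
    (x : Fin n → ℝ) :
    x ⬝ᵥ ((((1 : ℝ) / 2) • (1 : Matrix (Fin n) (Fin n) ℝ) + XiMat y z) *ᵥ x)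
      = (1/2) * (∑ i, x i ^ 2) + (∑ i, y i * x i ^ 2)
        + 2 * ∑ p : StrictUpperIdx n, z p * (x p.1.1 * x p.1.2) := by
  have expand : ∀ M : Matrix (Fin n) (Fin n) ℝ,
      x ⬝ᵥ (M *ᵥ x) = ∑ i, ∑ j, M i j * (x i * x j) := by
    intro M
    simp only [dotProduct, Matrix.mulVec, Finset.mul_sum]
    exact Finset.sum_congr rfl fun i _ => Finset.sum_congr rfl fun j _ => by ring
  have diagsum : ∀ v : Fin n → ℝ,
      ∑ i, ∑ j, Matrix.diagonal v i j * (x i * x j) = ∑ i, v i * x i ^ 2 := by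
    intro v
    apply Finset.sum_congr rfl; intro i _
    rw [Finset.sum_eq_single i]
    · rw [Matrix.diagonal_apply_eq]; ring
    · intro j _ hj; simp [Matrix.diagonal_apply_ne' _ hj]
    · simp
  have h12 : ((1 : ℝ)/2) • (1 : Matrix (Fin n) (Fin n) ℝ)
      = Matrix.diagonal (fun _ => (1:ℝ)/2) := by
    ext i j; by_cases h : i = j <;> simp [Matrix.one_apply, Matrix.diagonal_apply, h]
  rw [show XiMat y z = Matrix.diagonal (fun i => y i) + Umat z + (Umat z).transpose from rfl]
  rw [Matrix.add_mulVec, dotProduct_add, Matrix.add_mulVec, dotProduct_add,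
      Matrix.add_mulVec, dotProduct_add]
  rw [expand, expand, expand, expand, h12, diagsum, diagsum]
  have e3 : ∑ i, ∑ j, Umat z i j * (x i * x j)
      = ∑ p : StrictUpperIdx n, z p * (x p.1.1 * x p.1.2) := sum_U z _
  have e4 : ∑ i, ∑ j, (Umat z).transpose i j * (x i * x j)
      = ∑ p : StrictUpperIdx n, z p * (x p.1.1 * x p.1.2) := by
    simp only [Matrix.transpose_apply]
    rw [Finset.sum_comm]
    rw [show ∑ j, ∑ i, Umat z j i * (x i * x j) = ∑ j, ∑ i, Umat z j i * (x j * x i) from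
      Finset.sum_congr rfl fun j _ => Finset.sum_congr rfl fun i _ => by ring]
    exact sum_U z _
  rw [e3, e4]
  rw [Finset.mul_sum]
  ring

end Helpers

section Parts
open Matrix

lemma herm {n : ℕ} (y : EuclideanSpace ℝ (Fin n)) (z : EuclideanSpace ℝ (StrictUpperIdx n)) :
    (((1:ℝ)/2) • (1 : Matrix (Fin n) (Fin n) ℝ) + XiMat y z).IsHermitian := by
  unfold Matrix.IsHermitian
  ext i j
  by_cases h : i = j <;>
    simp [XiMat, Matrix.conjTranspose_apply, Matrix.one_apply, Matrix.diagonal_apply,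
      Matrix.transpose_apply, h, eq_comm] <;>
    try ring

lemma abs_apply_le {ι : Type*} [Fintype ι] (x : EuclideanSpace ℝ ι) (i : ι) : |x i| ≤ ‖x‖ := by
  have h1 : (x i)^2 ≤ ‖x‖^2 := by
    rw [norm_sq_eq]
    exact Finset.single_le_sum (fun j _ => sq_nonneg (x j)) (Finset.mem_univ i)
  calc |x i| = Real.sqrt ((x i)^2) := (Real.sqrt_sq_eq_abs _).symm
    _ ≤ Real.sqrt (‖x‖^2) := Real.sqrt_le_sqrt h1
    _ = ‖x‖ := Real.sqrt_sq (norm_nonneg x)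

lemma cross_sq_le {n : ℕ} (x : Fin n → ℝ) :
    ∑ p : StrictUpperIdx n, (x p.1.1 * x p.1.2)^2 ≤ (∑ i, x i ^ 2) * (∑ i, x i ^ 2) := by
  have e2 := Finset.sum_subtype (p := fun q : Fin n × Fin n => q.1 < q.2)
      (F := inferInstanceAs (Fintype (StrictUpperIdx n)))
      (Finset.univ.filter (fun q : Fin n × Fin n => q.1 < q.2))
      (by simp) (fun q : Fin n × Fin n => (x q.1 * x q.2)^2)
  rw [← e2]
  calc ∑ q ∈ Finset.univ.filter (fun q : Fin n × Fin n => q.1 < q.2), (x q.1 * x q.2)^2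
      ≤ ∑ q : Fin n × Fin n, (x q.1 * x q.2)^2 :=
        Finset.sum_le_sum_of_subset_of_nonneg (Finset.filter_subset _ _)
          (fun q _ _ => sq_nonneg _)
    _ = (∑ i, x i ^ 2) * (∑ i, x i ^ 2) := by
        rw [Finset.sum_mul_sum]
        rw [show (∑ q : Fin n × Fin n, (x q.1 * x q.2)^2)
            = ∑ i, ∑ j, (x i * x j)^2 from
          Fintype.sum_prod_type (fun q : Fin n × Fin n => (x q.1 * x q.2)^2)]
        exact Finset.sum_congr rfl fun i _ => Finset.sum_congr rfl fun j _ => by ring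

lemma part1 {n : ℕ} (y : EuclideanSpace ℝ (Fin n)) (z : EuclideanSpace ℝ (StrictUpperIdx n))
    (h : ‖y‖ + ‖z‖ ≤ 1/4) :
    (((1:ℝ)/2) • (1 : Matrix (Fin n) (Fin n) ℝ) + XiMat y z).PosSemidef := by
  refine Matrix.PosSemidef.of_dotProduct_mulVec_nonneg (herm y z) (fun x => ?_)
  have hx : star x = x := by simp
  rw [hx, quad_eq]
  set S := ∑ i, x i ^ 2 with hS
  set T := ∑ p : StrictUpperIdx n, z p * (x p.1.1 * x p.1.2) with hT
  have hS0 : 0 ≤ S := Finset.sum_nonneg fun i _ => sq_nonneg _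
  have hA : -(‖y‖ * S) ≤ ∑ i, y i * x i ^ 2 := by
    rw [hS, ← neg_mul, Finset.mul_sum]
    refine Finset.sum_le_sum fun i _ => ?_
    refine mul_le_mul_of_nonneg_right ?_ (sq_nonneg _)
    have := abs_apply_le y i
    have := neg_abs_le (y i)
    linarith
  have hCS : T^2 ≤ ‖z‖^2 * (S * S) := by
    calc T^2 ≤ (∑ p : StrictUpperIdx n, (z p)^2)
          * (∑ p : StrictUpperIdx n, (x p.1.1 * x p.1.2)^2) :=
        Finset.sum_mul_sq_le_sq_mul_sq Finset.univ _ _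
      _ ≤ ‖z‖^2 * (S * S) := by
          rw [← norm_sq_eq z]
          exact mul_le_mul_of_nonneg_left (cross_sq_le x) (by positivity)
  have hTlb : -(‖z‖ * S) ≤ T := by
    nlinarith [mul_nonneg (norm_nonneg z) hS0, sq_nonneg (T + ‖z‖ * S)]
  have hcoef : 0 ≤ 1/2 - ‖y‖ - 2*‖z‖ := by
    have := norm_nonneg y; have := norm_nonneg z; linarith
  nlinarith [mul_nonneg hcoef hS0]

end Parts

section Part2
open Matrix

lemma quad_single {n : ℕ} (y : EuclideanSpace ℝ (Fin n)) (z : EuclideanSpace ℝ (StrictUpperIdx n))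
    (i : Fin n) :
    (Pi.single i (1:ℝ)) ⬝ᵥ ((((1:ℝ)/2) • (1 : Matrix (Fin n) (Fin n) ℝ) + XiMat y z) *ᵥ
      (Pi.single i (1:ℝ))) = 1/2 + y i := by
  rw [quad_eq]
  have S1 : ∑ k, ((Pi.single i (1:ℝ) : Fin n → ℝ) k)^2 = (1:ℝ) := by
    rw [Finset.sum_eq_single i]
    · simp
    · intro j _ hj
      rw [Pi.single_eq_of_ne hj]
      simp
    · intro h; exact absurd (Finset.mem_univ i) h
  have S2 : ∑ k, y k * ((Pi.single i (1:ℝ) : Fin n → ℝ) k)^2 = y i := by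
    rw [Finset.sum_eq_single i]
    · simp
    · intro j _ hj
      rw [Pi.single_eq_of_ne hj]
      simp
    · intro h; exact absurd (Finset.mem_univ i) h
  have S3 : ∑ q : StrictUpperIdx n, z q *
      ((Pi.single i (1:ℝ) : Fin n → ℝ) q.1.1 * (Pi.single i (1:ℝ) : Fin n → ℝ) q.1.2) = 0 := by
    apply Finset.sum_eq_zero
    intro q _
    rcases q with ⟨⟨i', j'⟩, hlt⟩
    by_cases h1 : i' = i
    · have : j' ≠ i := by rintro rfl; exact absurd hlt (by simp [h1])
      simp [Pi.single_eq_of_ne this]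
    · simp [Pi.single_eq_of_ne h1]
  rw [S1, S2, S3]; ring

lemma quad_pair {n : ℕ} (y : EuclideanSpace ℝ (Fin n)) (z : EuclideanSpace ℝ (StrictUpperIdx n))
    (p : StrictUpperIdx n) (a : ℝ) :
    (fun k => if k = p.1.1 then (1:ℝ) else if k = p.1.2 then a else 0) ⬝ᵥ
      ((((1:ℝ)/2) • (1 : Matrix (Fin n) (Fin n) ℝ) + XiMat y z) *ᵥ
        (fun k => if k = p.1.1 then (1:ℝ) else if k = p.1.2 then a else 0))
    = (1/2)*(1 + a^2) + (y p.1.1 + a^2 * y p.1.2) + 2*(z p * a) := by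
  rw [quad_eq]
  set x : Fin n → ℝ := fun k => if k = p.1.1 then (1:ℝ) else if k = p.1.2 then a else 0 with hx
  obtain ⟨⟨i, j⟩, hij⟩ := p
  have hji : j ≠ i := ne_of_gt hij
  have hijne : i ≠ j := ne_of_lt hij
  have hxi : x i = 1 := by simp [hx]
  have hxj : x j = a := by simp [hx, hji]
  have hx0 : ∀ k, k ≠ i → k ≠ j → x k = 0 := by intro k h1 h2; simp [hx, h1, h2]
  have S1 : ∑ k, (x k)^2 = 1 + a^2 := by
    rw [← Finset.sum_subset (Finset.subset_univ ({i, j} : Finset (Fin n)))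
      (fun k _ hk => by simp at hk; simp [hx0 k hk.1 hk.2])]
    rw [Finset.sum_pair hijne, hxi, hxj]; ring
  have S2 : ∑ k, y k * (x k)^2 = y i + a^2 * y j := by
    rw [← Finset.sum_subset (Finset.subset_univ ({i, j} : Finset (Fin n)))
      (fun k _ hk => by simp at hk; simp [hx0 k hk.1 hk.2])]
    rw [Finset.sum_pair hijne, hxi, hxj]; ring
  have S3 : ∑ q : StrictUpperIdx n, z q * (x q.1.1 * x q.1.2)
      = z ⟨(i, j), hij⟩ * a := by
    rw [Finset.sum_eq_single (⟨(i, j), hij⟩ : StrictUpperIdx n)]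
    · rw [hxi, hxj]; ring
    · rintro ⟨⟨i', j'⟩, hlt⟩ _ hq
      by_cases h1 : i' = i
      · subst h1
        by_cases h2 : j' = j
        · subst h2; exact absurd rfl hq
        · have h3 : j' ≠ i' := ne_of_gt hlt
          rw [hx0 j' h3 h2]; ring
      · by_cases h3 : i' = j
        · subst h3
          have h4 : j' ≠ i := fun e => absurd (hij.trans hlt) (by rw [e]; exact lt_irrefl i)
          have h5 : j' ≠ i' := ne_of_gt hlt
          rw [hx0 j' h4 h5]; ring
        · rw [hx0 i' h1 h3]; ring
    · intro h; exact absurd (Finset.mem_univ _) h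
  rw [S1, S2, S3]

lemma part2 {n : ℕ} (hn : 1 ≤ n) (y : EuclideanSpace ℝ (Fin n))
    (z : EuclideanSpace ℝ (StrictUpperIdx n))
    (hP : (((1 : ℝ) / 2) • (1 : Matrix (Fin n) (Fin n) ℝ) + XiMat y z).PosSemidef)
    (hy : ∀ i, y i ≤ 1 / 2) : ‖y‖ + ‖z‖ ≤ (n : ℝ) * Real.sqrt n := by
  have hdiag : ∀ i, -(1/2) ≤ y i := by
    intro i
    have h := hP.dotProduct_mulVec_nonneg (Pi.single i (1:ℝ))
    simp only [star_trivial] at h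
    rw [quad_single] at h
    linarith
  have hoff : ∀ p : StrictUpperIdx n, (z p)^2 ≤ 1 := by
    intro p
    have h1 := hP.dotProduct_mulVec_nonneg (fun k => if k = p.1.1 then (1:ℝ) else if k = p.1.2 then 1 else 0)
    have h2 := hP.dotProduct_mulVec_nonneg (fun k => if k = p.1.1 then (1:ℝ) else if k = p.1.2 then -1 else 0)
    simp only [star_trivial] at h1 h2
    rw [quad_pair] at h1 h2
    have hyi := hy p.1.1; have hyj := hy p.1.2
    nlinarith
  set s := Real.sqrt n with hs
  have hs0 : (0:ℝ) ≤ s := Real.sqrt_nonneg _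
  have hs2 : s^2 = n := Real.sq_sqrt (by positivity)
  have hay : ‖y‖ ≤ s / 2 := by
    have h1 : ‖y‖^2 ≤ n * (1/4) := by
      rw [norm_sq_eq]
      calc ∑ i, (y i)^2 ≤ ∑ _i : Fin n, (1/4 : ℝ) :=
          Finset.sum_le_sum fun i _ => by nlinarith [hdiag i, hy i]
        _ = n * (1/4) := by simp [Finset.sum_const, Finset.card_univ, mul_comm]
    nlinarith [norm_nonneg y, Real.sqrt_pos.mpr (show (0:ℝ) < n by positivity), hs2]
  have haz : ‖z‖ ≤ (n : ℝ) := by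
    have h1 : ‖z‖^2 ≤ ((n:ℝ) * n) := by
      rw [norm_sq_eq]
      calc ∑ p : StrictUpperIdx n, (z p)^2 ≤ ∑ _p : StrictUpperIdx n, (1:ℝ) :=
          Finset.sum_le_sum fun p _ => hoff p
        _ = Fintype.card (StrictUpperIdx n) := by simp
        _ ≤ ((n:ℝ) * n) := by
            have hcard : Fintype.card (StrictUpperIdx n) ≤ n * n := by
              simpa using Fintype.card_subtype_le (fun q : Fin n × Fin n => q.1 < q.2)
            exact_mod_cast hcard
    nlinarith [norm_nonneg z, show (0:ℝ) < n by positivity]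
  rcases eq_or_lt_of_le hn with h1 | h2
  · -- n = 1
    have hn1 : n = 1 := h1.symm
    subst hn1
    haveI : IsEmpty (StrictUpperIdx 1) := ⟨fun p => absurd p.2 (by
      rw [Subsingleton.elim p.val.1 p.val.2]; exact lt_irrefl _)⟩
    have hz0 : ‖z‖ = 0 := by
      have hz : z = 0 := by ext p; exact isEmptyElim p
      rw [hz]; exact norm_zero
    rw [hz0]
    simp only [Nat.cast_one, Real.sqrt_one] at hay ⊢
    show ‖y‖ + 0 ≤ 1 * s
    clear_value s; linarith
  · -- n ≥ 2
    have hn2 : (2:ℝ) ≤ n := by exact_mod_cast h2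
    have key : s/2 + (n:ℝ) ≤ (n:ℝ) * s := by
      have h22 : (2:ℝ) ≤ s^2 := by rw [hs2]; exact hn2
      have hA : 0 ≤ s*(s-1)^2 := mul_nonneg hs0 (sq_nonneg _)
      have hB : 0 ≤ s*(s^2-2) := mul_nonneg hs0 (by linarith)
      nlinarith [hA, hB, hs2, hs0]
    linarith
end Part2

/-- With `c = I_n/2`, the reparametrized set of PSD matrices with diagonal
entries in `[0,1]`, `C = {(y, z) : c + Ξ(y, z) ⪰ 0 and y_i ≤ 1/2 ∀i}`, satisfies
`B(1/4) ⊆ C ⊆ B(n^{3/2})` for the norm `‖(y, z)‖ = ‖y‖ + ‖z‖`. -/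
theorem psd_bounded_diag_reparam_ball_sandwich (n : ℕ) (hn : 1 ≤ n) :
    (∀ (y : EuclideanSpace ℝ (Fin n)) (z : EuclideanSpace ℝ (StrictUpperIdx n)),
        ‖y‖ + ‖z‖ ≤ 1 / 4 →
          (((1 : ℝ) / 2) • (1 : Matrix (Fin n) (Fin n) ℝ) + XiMat y z).PosSemidef ∧
            ∀ i, y i ≤ 1 / 2) ∧
      ∀ (y : EuclideanSpace ℝ (Fin n)) (z : EuclideanSpace ℝ (StrictUpperIdx n)),
        (((1 : ℝ) / 2) • (1 : Matrix (Fin n) (Fin n) ℝ) + XiMat y z).PosSemidef →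
          (∀ i, y i ≤ 1 / 2) → ‖y‖ + ‖z‖ ≤ (n : ℝ) * Real.sqrt n := by
  constructor
  · intro y z h
    refine ⟨part1 y z h, fun i => ?_⟩
    have h1 := abs_apply_le y i
    have h2 := le_abs_self (y i)
    have h3 := norm_nonneg z
    linarith
  · intro y z hP hy
    exact part2 hn y z hP hy
end
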